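/- The function (m,c) ↦ f(m,c) is continuous on the set of pairs of positive real numbers {(m,c) : m > 0, c > 0}. -/

import Mathlib

open Real

lemma factorial_lb : ∃ d : ℝ, 0 < d ∧ ∀ j : ℕ,
    d * (Real.sqrt (2 * (j+1)) * (((j:ℝ)+1) / Real.exp 1) ^ (j+1)) ≤ ((j+1).factorial : ℝ) := by
  obtain ⟨d, hd, h⟩ := Stirling.stirlingSeq'_bounded_by_pos_constant
  refine ⟨d, hd, fun j => ?_⟩
  have h1 := h j
  rw [Stirling.stirlingSeq] at h1
  push_cast at h1 ⊢
  have hpos : 0 < Real.sqrt (2 * ((j:ℝ)+1)) * (((j:ℝ)+1) / Real.exp 1) ^ (j+1) := by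
    positivity
  rw [le_div_iff₀ hpos] at h1
  linarith

lemma summable_32 : Summable (fun n : ℕ => 1 / ((n:ℝ) * Real.sqrt n)) := by
  have h := Real.summable_one_div_nat_rpow.mpr (show (1:ℝ) < 3/2 by norm_num)
  refine h.congr fun n => ?_
  rcases Nat.eq_zero_or_pos n with rfl | hn
  · simp
  · have hn' : (0:ℝ) < n := by exact_mod_cast hn
    rw [show (3/2:ℝ) = 1 + 1/2 by norm_num, Real.rpow_add hn', Real.rpow_one,
      ← Real.sqrt_eq_rpow]

lemma summable_aux (X : ℝ) (hX : 0 ≤ X) :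
    Summable (fun k : ℕ => ((k:ℝ) + X) ^ (k - 1) * Real.exp (-(k:ℝ)) / (k.factorial : ℝ)) := by
  obtain ⟨d, hd, hstir⟩ := factorial_lb
  rw [← summable_nat_add_iff 1]
  have hsum : Summable (fun n : ℕ => Real.exp X / d * (1 / (((n+1):ℝ) * Real.sqrt (n+1)))) := by
    apply Summable.mul_left
    exact ((summable_nat_add_iff 1).mpr summable_32).congr fun n => by push_cast; ring_nf
  refine hsum.of_nonneg_of_le (fun j => by positivity) fun j => ?_
  set n : ℝ := (j:ℝ) + 1 with hn
  have hn1 : (1:ℝ) ≤ n := by rw [hn]; have : (0:ℝ) ≤ j := Nat.cast_nonneg j; linarith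
  have hn0 : (0:ℝ) < n := by linarith
  -- step 1 : (n + X)^j ≤ n^j * exp X
  have step1 : (n + X) ^ j ≤ n ^ j * Real.exp X := by
    have h1 : n + X ≤ n * Real.exp (X / n) := by
      have := Real.add_one_le_exp (X / n)
      have h2 : n * (X / n + 1) ≤ n * Real.exp (X / n) := by
        apply mul_le_mul_of_nonneg_left this (le_of_lt hn0)
      calc n + X = n * (X / n + 1) := by field_simp; ring
        _ ≤ _ := h2
    calc (n + X) ^ j ≤ (n * Real.exp (X / n)) ^ j := by
          apply pow_le_pow_left₀ (by positivity) h1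
      _ = n ^ j * Real.exp (X / n) ^ j := by rw [mul_pow]
      _ ≤ n ^ j * Real.exp X := by
          apply mul_le_mul_of_nonneg_left _ (by positivity)
          rw [← Real.exp_nat_mul]
          apply Real.exp_le_exp.mpr
          calc (j:ℝ) * (X / n) ≤ n * (X / n) := by
                apply mul_le_mul_of_nonneg_right _ (by positivity)
                simp [hn]
            _ = X := by field_simp
  -- step 2 : factorial lower bound
  have step2 : d * (Real.sqrt (2 * n) * (n / Real.exp 1) ^ (j+1)) ≤ ((j+1).factorial : ℝ) := by
    have := hstir j
    convert this using 4 <;> push_cast <;> ring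
  have hfacpos : (0:ℝ) < ((j+1).factorial : ℝ) := by positivity
  have hdenpos : (0:ℝ) < d * (Real.sqrt (2 * n) * (n / Real.exp 1) ^ (j+1)) := by positivity
  -- main chain
  have key : ((j+1:ℕ):ℝ) + X = n + X := by push_cast; ring
  have hsub : (j + 1) - 1 = j := by omega
  rw [hsub]
  calc (((j+1:ℕ):ℝ) + X) ^ j * Real.exp (-((j+1:ℕ):ℝ)) / ((j+1).factorial : ℝ)
      ≤ (n ^ j * Real.exp X) * Real.exp (-((j+1:ℕ):ℝ)) /
        (d * (Real.sqrt (2 * n) * (n / Real.exp 1) ^ (j+1))) := by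
        rw [key]
        apply div_le_div₀ (by positivity) _ hdenpos step2
        exact mul_le_mul_of_nonneg_right step1 (by positivity)
    _ = Real.exp X / d * (1 / (n * Real.sqrt (2 * n))) := by
        have hexp : ((j+1:ℕ):ℝ) = n := by push_cast; ring
        have he : Real.exp 1 ^ (j+1) = Real.exp (n) := by
          rw [← Real.exp_nat_mul]; push_cast; ring_nf; rw [hn]; ring_nf
        rw [hexp, div_pow, he, Real.exp_neg, pow_succ]
        field_simp
    _ ≤ Real.exp X / d * (1 / (n * Real.sqrt n)) := by
        apply mul_le_mul_of_nonneg_left _ (by positivity)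
        apply one_div_le_one_div_of_le (by positivity)
        apply mul_le_mul_of_nonneg_left _ (le_of_lt hn0)
        apply Real.sqrt_le_sqrt; linarith
    _ = Real.exp X / d * (1 / (((j:ℝ)+1) * Real.sqrt ((j:ℝ)+1))) := by rw [hn]

lemma term_bound (a m c : ℝ) (ha : 0 < a) (hm : a ≤ m) (hc : 0 < c) (k : ℕ) :
    |((k : ℝ) * m + 1) ^ (k - 1) * c ^ k * Real.exp (-c * ((k : ℝ) * m + 1) / m) /
      (m ^ k * (Nat.factorial k : ℝ))|
    ≤ (1/a + 1) * (((k:ℝ) + 1/a) ^ (k - 1) * Real.exp (-(k:ℝ)) / (Nat.factorial k : ℝ)) := by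
  have hm0 : 0 < m := lt_of_lt_of_le ha hm
  have hmne : m ≠ 0 := ne_of_gt hm0
  have ha0 : (0:ℝ) < 1/a := by positivity
  rw [abs_of_nonneg (by positivity)]
  have hce : c * Real.exp (-c) ≤ Real.exp (-1) := by
    have h1 : c ≤ Real.exp (c - 1) := by
      have := Real.add_one_le_exp (c - 1); linarith
    calc c * Real.exp (-c) ≤ Real.exp (c-1) * Real.exp (-c) := by
          apply mul_le_mul_of_nonneg_right h1 (le_of_lt (Real.exp_pos _))
      _ = Real.exp (-1) := by rw [← Real.exp_add]; ring_nf
  rcases k with _ | j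
  · simp only [Nat.cast_zero, zero_mul, zero_add, one_pow, pow_zero, Nat.factorial_zero,
      Nat.cast_one, mul_one, one_mul, neg_zero, Real.exp_zero, div_one, Nat.zero_sub]
    have h1 : Real.exp (-c / m) ≤ 1 := by
      rw [Real.exp_le_one_iff]
      have : 0 < c / m := by positivity
      calc -c / m = -(c/m) := by ring
        _ ≤ 0 := by linarith
    linarith
  · set k := j + 1 with hk
    have hkc : ((k:ℕ):ℝ) = (j:ℝ) + 1 := by rw [hk]; push_cast; ring
    have hsub : k - 1 = j := rfl
    rw [hsub]
    -- split the exponential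
    have hsplit : Real.exp (-c * ((k:ℝ) * m + 1) / m)
        = Real.exp (-c) ^ k * Real.exp (-c/m) := by
      rw [← Real.exp_nat_mul, ← Real.exp_add]
      congr 1
      field_simp
      ring
    have hbase : ((k:ℝ) + 1/m) ^ j * m ^ j = ((k:ℝ) * m + 1) ^ j := by
      rw [← mul_pow]; congr 1; field_simp
    have heq : ((k : ℝ) * m + 1) ^ j * c ^ k * Real.exp (-c * ((k : ℝ) * m + 1) / m) /
        (m ^ k * (Nat.factorial k : ℝ))
        = ((k:ℝ) + 1/m) ^ j * (c * Real.exp (-c)) ^ k * Real.exp (-c/m) /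
          (m * (Nat.factorial k : ℝ)) := by
      rw [hsplit, ← hbase, mul_pow c, show m ^ k = m ^ j * m from pow_succ m j]
      have hfac : ((Nat.factorial k : ℝ)) ≠ 0 := by positivity
      field_simp
    rw [heq]
    have hstep : ((k:ℝ) + 1/m) ^ j * (c * Real.exp (-c)) ^ k * Real.exp (-c/m) /
          (m * (Nat.factorial k : ℝ))
        ≤ ((k:ℝ) + 1/a) ^ j * (Real.exp (-1)) ^ k * 1 / (a * (Nat.factorial k : ℝ)) := by
      have hfacpos : (0:ℝ) < (Nat.factorial k : ℝ) := by positivity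
      gcongr ?_ * ?_ * ?_ / ?_
      · exact pow_le_pow_left₀ (by positivity) (by linarith [one_div_le_one_div_of_le ha hm]) j
      · exact pow_le_pow_left₀ (by positivity) hce k
      · rw [Real.exp_le_one_iff]
        have : 0 < c / m := by positivity
        calc -c/m = -(c/m) := by ring
          _ ≤ 0 := by linarith
      · exact mul_le_mul_of_nonneg_right hm (le_of_lt hfacpos)
    refine hstep.trans ?_
    have hexpk : (Real.exp (-1)) ^ k = Real.exp (-(k:ℝ)) := by
      rw [← Real.exp_nat_mul]; ring_nf
    rw [hexpk, mul_one]
    have hcore : (0:ℝ) ≤ ((k:ℝ) + 1/a) ^ j * Real.exp (-(k:ℝ)) / (Nat.factorial k : ℝ) := by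
      positivity
    have heq2 : ((k:ℝ) + 1/a) ^ j * Real.exp (-(k:ℝ)) / (a * (Nat.factorial k : ℝ))
        = (1/a) * (((k:ℝ) + 1/a) ^ j * Real.exp (-(k:ℝ)) / (Nat.factorial k : ℝ)) := by
      field_simp
    rw [heq2]
    exact mul_le_mul_of_nonneg_right (by linarith) hcore



/-- `f m c = ∑_{k=0}^∞ (km+1)^{k-1} c^k e^{-c(km+1)/m} / (m^k k!)`, where the factor
`(km+1)^{k-1}` for `k = 0` is interpreted as `1` (here via `ℕ`-subtraction in the exponent,
which gives `(0·m+1)^0 = 1`). -/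
noncomputable def f (m c : ℝ) : ℝ :=
  ∑' k : ℕ, ((k : ℝ) * m + 1) ^ (k - 1) * c ^ k *
    Real.exp (-c * ((k : ℝ) * m + 1) / m) / (m ^ k * (Nat.factorial k : ℝ))

theorem f_continuousOn :
    ContinuousOn (fun p : ℝ × ℝ => f p.1 p.2) {p : ℝ × ℝ | 0 < p.1 ∧ 0 < p.2} := by
  intro p hp
  obtain ⟨hm₀, hc₀⟩ := hp
  set a : ℝ := p.1 / 2 with hadef
  have ha : 0 < a := by positivity
  set s : Set (ℝ × ℝ) := Set.Ici a ×ˢ Set.Ioi (0:ℝ) with hsdef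
  have hs : s ∈ nhds p := by
    exact prod_mem_nhds (Ici_mem_nhds (by rw [hadef]; linarith)) (Ioi_mem_nhds hc₀)
  apply (ContinuousOn.continuousAt ?_ hs).continuousWithinAt
  have hmem : ∀ q : ℝ × ℝ, q ∈ s → a ≤ q.1 ∧ 0 < q.2 := by
    intro q hq
    rw [hsdef, Set.mem_prod] at hq
    exact ⟨hq.1, hq.2⟩
  unfold f
  apply continuousOn_tsum (u := fun k : ℕ =>
      (1/a + 1) * (((k:ℝ) + 1/a) ^ (k - 1) * Real.exp (-(k:ℝ)) / (Nat.factorial k : ℝ)))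
  · intro k
    apply ContinuousOn.div
    · apply ContinuousOn.mul
      · apply Continuous.continuousOn; fun_prop
      · apply Real.continuous_exp.comp_continuousOn
        apply ContinuousOn.div
        · apply Continuous.continuousOn; fun_prop
        · exact continuous_fst.continuousOn
        · intro q hq
          have := (hmem q hq).1
          intro h; rw [h] at this; linarith
    · apply Continuous.continuousOn; fun_prop
    · intro q hq
      have h1 : 0 < q.1 := lt_of_lt_of_le ha (hmem q hq).1
      positivity
  · exact (summable_aux (1/a) (by positivity)).mul_left _
  · intro k q hq
    rw [Real.norm_eq_abs]
    exact term_bound a q.1 q.2 ha (hmem q hq).1 (hmem q hq).2 k
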